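/- For any graph G with boundary, the Neumann Laplacian operator Δ^N : ℝ^{Ω_G} → ℝ^{Ω_G} satisfies ⟨Δ^N f, g⟩_{Ω_G} = Σ_{{x,y} ∈ E} (F(x) − F(y))(H(x) − H(y)) for all f, g ∈ ℝ^{Ω_G}, where F = Λ(f) and H = Λ(g) are the harmonic-type extensions; in particular Δ^N is self-adjoint and nonnegative with respect to ⟨·,·⟩_{Ω_G}. -/

import Mathlib

open Finset
open scoped Classical

noncomputable section

variable {V : Type*} [Fintype V]

/-- Graph Laplacian `Δf(x) = Σ_{y∼x} (f x - f y)`. -/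
def glap (G : SimpleGraph V) (f : V → ℝ) (x : V) : ℝ :=
  ∑ y ∈ G.neighborFinset x, (f x - f y)

/-- Harmonic-type extension `Λ` : keep values on the interior `Ω`, average of
neighbor values on the boundary. -/
def nExt (G : SimpleGraph V) (Ω : Finset V) (f : V → ℝ) (x : V) : ℝ :=
  if x ∈ Ω then f x else (∑ y ∈ G.neighborFinset x, f y) / (G.degree x)

/-- Neumann Laplacian `Δ^N f = Δ(Λ f)` (restricted to the interior). -/
def nLap (G : SimpleGraph V) (Ω : Finset V) (f : V → ℝ) (x : V) : ℝ :=
  glap G (nExt G Ω f) x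

lemma glap_eq (G : SimpleGraph V) (F : V → ℝ) (x : V) :
    glap G F x = ∑ y : V, if G.Adj x y then F x - F y else 0 := by
  rw [glap, SimpleGraph.neighborFinset_eq_filter, Finset.sum_filter]

lemma sum_glap (G : SimpleGraph V) (F H : V → ℝ) :
    ∑ x : V, glap G F x * H x =
      (1/2) * ∑ x : V, ∑ y : V, if G.Adj x y then (F x - F y) * (H x - H y) else 0 := by
  have h1 : ∑ x : V, glap G F x * H x =
      ∑ x : V, ∑ y : V, (if G.Adj x y then (F x - F y) * H x else 0) := by
    refine Finset.sum_congr rfl fun x _ => ?_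
    rw [glap_eq, Finset.sum_mul]
    exact Finset.sum_congr rfl fun y _ => by split <;> simp
  have h2 : ∑ x : V, ∑ y : V, (if G.Adj x y then (F x - F y) * H y else 0) =
      - ∑ x : V, ∑ y : V, (if G.Adj x y then (F x - F y) * H x else 0) := by
    rw [Finset.sum_comm, ← Finset.sum_neg_distrib]
    refine Finset.sum_congr rfl fun y _ => ?_
    rw [← Finset.sum_neg_distrib]
    refine Finset.sum_congr rfl fun x _ => ?_
    rw [G.adj_comm]
    split <;> ring
  rw [h1]
  have h3 : ∑ x : V, ∑ y : V, (if G.Adj x y then (F x - F y) * (H x - H y) else 0) =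
      (∑ x : V, ∑ y : V, (if G.Adj x y then (F x - F y) * H x else 0)) -
      (∑ x : V, ∑ y : V, (if G.Adj x y then (F x - F y) * H y else 0)) := by
    rw [← Finset.sum_sub_distrib]
    refine Finset.sum_congr rfl fun x _ => ?_
    rw [← Finset.sum_sub_distrib]
    refine Finset.sum_congr rfl fun y _ => by split <;> ring
  rw [h3, h2]
  ring

lemma key (G : SimpleGraph V)
    (Ω : Finset V)
    (hB1 : ∀ x : V, x ∉ Ω → ∃ y ∈ Ω, G.Adj x y)
    (hB2 : ∀ x : V, x ∉ Ω → ∀ y : V, y ∉ Ω → ¬ G.Adj x y)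
    (f g : V → ℝ) :
    ∑ x ∈ Ω, nLap G Ω f x * g x =
        (1 / 2) * ∑ x : V, ∑ y : V, if G.Adj x y then
          (nExt G Ω f x - nExt G Ω f y) * (nExt G Ω g x - nExt G Ω g y) else 0 := by
  set F := nExt G Ω f with hF
  set H := nExt G Ω g with hH
  have hbd : ∀ x : V, x ∉ Ω → glap G F x = 0 := by
    intro x hx
    have hdeg : (0 : ℝ) < G.degree x := by
      obtain ⟨y, _, hadj⟩ := hB1 x hx
      have : 0 < G.degree x := G.degree_pos_iff_exists_adj x |>.2 ⟨y, hadj⟩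
      exact_mod_cast this
    have hFx : F x = (∑ y ∈ G.neighborFinset x, f y) / (G.degree x) := by
      rw [hF, nExt, if_neg hx]
    have hFy : ∀ y ∈ G.neighborFinset x, F y = f y := by
      intro y hy
      rw [SimpleGraph.mem_neighborFinset] at hy
      have hyΩ : y ∈ Ω := by
        by_contra h
        exact hB2 x hx y h hy
      rw [hF, nExt, if_pos hyΩ]
    rw [glap, Finset.sum_sub_distrib, Finset.sum_const,
      SimpleGraph.card_neighborFinset_eq_degree, Finset.sum_congr rfl hFy,
      nsmul_eq_mul, hFx]
    field_simp
    ring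
  have h1 : ∑ x ∈ Ω, nLap G Ω f x * g x = ∑ x : V, glap G F x * H x := by
    rw [← Finset.sum_subset (Finset.subset_univ Ω)]
    · refine Finset.sum_congr rfl fun x hx => ?_
      rw [nLap, hH, nExt, if_pos hx]
    · intro x _ hx
      rw [hbd x hx, zero_mul]
  rw [h1, sum_glap]


/-- `⟨Δ^N f, g⟩_Ω = Σ_{{x,y}∈E} (F x − F y)(H x − H y)` with
`F = Λ f`, `H = Λ g`; in particular `Δ^N` is self-adjoint and nonnegative
w.r.t. `⟨·,·⟩_Ω`. -/
theorem stmt_3 (G : SimpleGraph V) (hconn : G.Connected)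
    (Ω : Finset V)
    (hB1 : ∀ x : V, x ∉ Ω → ∃ y ∈ Ω, G.Adj x y)
    (hB2 : ∀ x : V, x ∉ Ω → ∀ y : V, y ∉ Ω → ¬ G.Adj x y) :
    (∀ f g : V → ℝ,
      ∑ x ∈ Ω, nLap G Ω f x * g x =
        (1 / 2) * ∑ x : V, ∑ y : V, if G.Adj x y then
          (nExt G Ω f x - nExt G Ω f y) * (nExt G Ω g x - nExt G Ω g y) else 0) ∧
    (∀ f g : V → ℝ,
      ∑ x ∈ Ω, nLap G Ω f x * g x = ∑ x ∈ Ω, f x * nLap G Ω g x) ∧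
    (∀ f : V → ℝ, 0 ≤ ∑ x ∈ Ω, nLap G Ω f x * f x) := by
  refine ⟨key G Ω hB1 hB2, ?_, ?_⟩
  · intro f g
    rw [key G Ω hB1 hB2 f g]
    have := key G Ω hB1 hB2 g f
    rw [show ∑ x ∈ Ω, f x * nLap G Ω g x = ∑ x ∈ Ω, nLap G Ω g x * f x from
      Finset.sum_congr rfl fun x _ => mul_comm _ _, this]
    congr 1
    refine Finset.sum_congr rfl fun x _ => Finset.sum_congr rfl fun y _ => ?_
    split <;> ring
  · intro f
    rw [key G Ω hB1 hB2 f f]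
    have : (0:ℝ) ≤ ∑ x : V, ∑ y : V, if G.Adj x y then
        (nExt G Ω f x - nExt G Ω f y) * (nExt G Ω f x - nExt G Ω f y) else 0 := by
      refine Finset.sum_nonneg fun x _ => Finset.sum_nonneg fun y _ => ?_
      split
      · exact mul_self_nonneg _
      · exact le_refl 0
    linarith
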